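/- Under sign GD with decoupled weight decay on the UFM with W_0 = 0, the NC0 quantity α_t = ⟨W_t W_t^T, (1/K)11^T⟩_F satisfies α_t = ((K-2)²/λ²)(1 - (1-ηλ)^t)², which increases monotonically from 0 and converges to (K-2)²/λ² > 0 as t → ∞ (for K ≥ 3). -/

import Mathlib

open Matrix Filter

lemma trace_key' {K : ℕ} (A : Matrix (Fin K) (Fin K) ℝ)
    (J : Matrix (Fin K) (Fin K) ℝ) (hJ : J = Matrix.of fun _ _ => (1 : ℝ)) :
    Matrix.trace ((A * Aᵀ)ᵀ * ((K : ℝ)⁻¹ • J)) =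
      (K : ℝ)⁻¹ * ∑ k, (∑ i, A i k) ^ 2 := by
  have key : ∀ f : Fin K → Fin K → ℝ,
      (∑ j, ∑ i, ∑ k, f i k * f j k) = ∑ k, (∑ i, f i k) * (∑ j, f j k) := by
    intro f
    simp_rw [Finset.sum_mul_sum]
    conv_lhs => enter [2, j]; rw [Finset.sum_comm]
    conv_lhs => rw [Finset.sum_comm]
    conv_lhs => enter [2, k]; rw [Finset.sum_comm]
  subst hJ
  simp only [Matrix.trace, Matrix.diag, Matrix.mul_apply, Matrix.transpose_apply,
    Matrix.smul_apply, Matrix.of_apply, smul_eq_mul, mul_one]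
  simp_rw [← Finset.sum_mul]
  rw [key A, Finset.mul_sum, Finset.sum_mul]
  exact Finset.sum_congr rfl fun k _ => by ring

/-- Sign GD with decoupled weight decay on the UFM with `W 0 = 0`, where the
signed gradient is constantly `J - 2I`: the NC0 quantity
`α_t = ⟨W_t W_tᵀ, (1/K)J⟩_F` equals `((K-2)²/λ²)(1-(1-ηλ)^t)²`; it is monotone
increasing from `0` and converges to `(K-2)²/λ² > 0`. -/
theorem signGD_decoupled_avoids_NC0
    {K : ℕ} (hK : 3 ≤ K) (η lam : ℝ) (hη : 0 < η) (hlam : 0 < lam)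
    (hprod : η * lam < 1)
    (J : Matrix (Fin K) (Fin K) ℝ) (hJ : J = Matrix.of fun _ _ => (1 : ℝ))
    (W : ℕ → Matrix (Fin K) (Fin K) ℝ) (hW0 : W 0 = 0)
    (hW : ∀ t, W (t + 1) = W t - η •
      ((J - 2 • (1 : Matrix (Fin K) (Fin K) ℝ)) + lam • W t))
    (α : ℕ → ℝ)
    (hα : ∀ t, α t = Matrix.trace ((W t * (W t)ᵀ)ᵀ * ((K : ℝ)⁻¹ • J))) :
    (∀ t, α t = (((K : ℝ) - 2) ^ 2 / lam ^ 2) * (1 - (1 - η * lam) ^ t) ^ 2) ∧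
      Monotone α ∧ α 0 = 0 ∧
      Tendsto α atTop (nhds (((K : ℝ) - 2) ^ 2 / lam ^ 2)) ∧
      0 < ((K : ℝ) - 2) ^ 2 / lam ^ 2 := by
  have hlam' : lam ≠ 0 := ne_of_gt hlam
  have hK3 : (3 : ℝ) ≤ (K : ℝ) := by exact_mod_cast hK
  have hK0 : (K : ℝ) ≠ 0 := by positivity
  set r : ℝ := 1 - η * lam with hr
  have hr0 : 0 < r := by simp only [hr]; linarith
  have hr1 : r < 1 := by simp only [hr]; nlinarith
  -- closed form for W
  have hWt : ∀ t, W t =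
      ((-(1 - r ^ t)) / lam) • (J - 2 • (1 : Matrix (Fin K) (Fin K) ℝ)) := by
    intro t
    induction t with
    | zero => simp [hW0]
    | succ t ih =>
      rw [hW t, ih]
      match_scalars <;>
      · simp only [hr]
        field_simp
        ring
  -- column sums
  have colsum : ∀ (c : ℝ) (k : Fin K),
      (∑ i, (c • (J - 2 • (1 : Matrix (Fin K) (Fin K) ℝ))) i k) = c * ((K : ℝ) - 2) := by
    intro c k
    have hpt : ∀ i, (c • (J - 2 • (1 : Matrix (Fin K) (Fin K) ℝ))) i k
        = c - 2 * c * (if i = k then (1 : ℝ) else 0) := by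
      intro i
      simp only [Matrix.smul_apply, Matrix.sub_apply, hJ, Matrix.of_apply,
        Matrix.smul_apply, Matrix.one_apply, smul_eq_mul]
      by_cases h : i = k <;> simp [h] <;> ring
    simp_rw [hpt]
    rw [Finset.sum_sub_distrib]
    simp [Finset.sum_ite_eq, mul_comm]
    ring
  -- closed form for α
  have hαt : ∀ t, α t = (((K : ℝ) - 2) ^ 2 / lam ^ 2) * (1 - r ^ t) ^ 2 := by
    intro t
    rw [hα t, hWt t, trace_key' _ J hJ]
    simp_rw [colsum]
    rw [Finset.sum_const, Finset.card_univ, Fintype.card_fin, nsmul_eq_mul]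
    field_simp
  refine ⟨hαt, ?_, ?_, ?_, ?_⟩
  · apply monotone_nat_of_le_succ
    intro t
    rw [hαt t, hαt (t + 1)]
    have h1 : r ^ (t + 1) ≤ r ^ t := by
      rw [pow_succ]
      nlinarith [pow_pos hr0 t]
    have h2 : r ^ t ≤ 1 := pow_le_one₀ (le_of_lt hr0) (le_of_lt hr1)
    have hC : 0 ≤ ((K : ℝ) - 2) ^ 2 / lam ^ 2 := by positivity
    exact mul_le_mul_of_nonneg_left
      (pow_le_pow_left₀ (by linarith) (by linarith) 2) hC
  · rw [hαt 0]; simp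
  · have hlim : Tendsto (fun t : ℕ => r ^ t) atTop (nhds 0) :=
      tendsto_pow_atTop_nhds_zero_of_lt_one (le_of_lt hr0) hr1
    have h : Tendsto (fun t : ℕ => (((K : ℝ) - 2) ^ 2 / lam ^ 2) * (1 - r ^ t) ^ 2)
        atTop (nhds ((((K : ℝ) - 2) ^ 2 / lam ^ 2) * (1 - (0 : ℝ)) ^ 2)) :=
      (((tendsto_const_nhds (α := ℕ) (x := (1 : ℝ))).sub hlim).pow 2).const_mul _
    rw [show α = fun t => (((K : ℝ) - 2) ^ 2 / lam ^ 2) * (1 - r ^ t) ^ 2 from funext hαt]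
    simpa using h
  · have : (0 : ℝ) < (K : ℝ) - 2 := by linarith
    positivity
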